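/- The maximum cardinality of a trifferent code of length 4 equals 9: there exists a trifferent code C ⊆ {0,1,2}^4 with |C| = 9 (the tetra-code), and every trifferent code of length 4 has cardinality at most 9. -/

import Mathlib

def Trifferent {n : ℕ} (C : Finset (Fin n → Fin 3)) : Prop :=
  ∀ x ∈ C, ∀ y ∈ C, ∀ z ∈ C, x ≠ y → x ≠ z → y ≠ z →
    ∃ i : Fin n, x i ≠ y i ∧ x i ≠ z i ∧ y i ≠ z i

set_option synthInstance.maxSize 1000 in
set_option synthInstance.maxHeartbeats 400000 in
instance trifDec {n : ℕ} (C : Finset (Fin n → Fin 3)) : Decidable (Trifferent C) := by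
  unfold Trifferent; infer_instance

lemma fin3_helper (a b c w : Fin 3) (h1 : a ≠ b) (h2 : a ≠ c) (h3 : b ≠ c)
    (h4 : a ≠ w) (h5 : b ≠ w) (h6 : c ≠ w) : False := by
  have := a.isLt; have := b.isLt; have := c.isLt; have := w.isLt
  have e1 := Fin.val_ne_of_ne h1
  have e2 := Fin.val_ne_of_ne h2
  have e3 := Fin.val_ne_of_ne h3
  have e4 := Fin.val_ne_of_ne h4
  have e5 := Fin.val_ne_of_ne h5
  have e6 := Fin.val_ne_of_ne h6
  omega

set_option maxHeartbeats 4000000 in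
set_option maxRecDepth 100000 in
lemma trif_two : ∀ C : Finset (Fin 2 → Fin 3), ¬(Trifferent C ∧ 4 < C.card) := by
  decide

lemma trif_step {n m : ℕ} (hm2 : 2 ≤ m)
    (hm : ∀ D : Finset (Fin n → Fin 3), Trifferent D → D.card ≤ m)
    (C : Finset (Fin (n + 1) → Fin 3)) (hC : Trifferent C) :
    2 * C.card ≤ 3 * m := by
  classical
  -- find a least popular value at coordinate 0
  have hpart : C.card = ∑ v : Fin 3, (C.filter fun x => x 0 = v).card :=
    Finset.card_eq_sum_card_fiberwise (fun x _ => Finset.mem_univ (x 0))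
  obtain ⟨v, hv⟩ : ∃ v : Fin 3, 3 * (C.filter fun x => x 0 = v).card ≤ C.card := by
    by_contra h
    push_neg at h
    have hlt : 3 * C.card < ∑ v : Fin 3, 3 * (C.filter fun x => x 0 = v).card := by
      have := Finset.sum_lt_sum_of_nonempty (s := (Finset.univ : Finset (Fin 3)))
        ⟨0, Finset.mem_univ 0⟩ (f := fun _ => C.card)
        (g := fun v => 3 * (C.filter fun x => x 0 = v).card) (fun v _ => h v)
      simpa [Finset.sum_const, mul_comm] using this
    rw [← Finset.mul_sum, ← hpart] at hlt
    exact absurd hlt (lt_irrefl _)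
  have hDcard : (C.filter fun x => x 0 = v).card
      + (C.filter fun x => ¬(x 0 = v)).card = C.card :=
    Finset.card_filter_add_card_filter_not (s := C) (p := fun x => x 0 = v)
  set D := C.filter (fun x => ¬(x 0 = v)) with hD
  have hDsub : D ⊆ C := Finset.filter_subset _ _
  have h2D : 2 * C.card ≤ 3 * D.card := by linarith
  clear hv hDcard hpart
  by_cases hsmall : D.card ≤ 2
  · omega
  push_neg at hsmall
  -- projection forgetting coordinate 0
  have hinj : Set.InjOn (fun x => x ∘ Fin.succ) (D : Set (Fin (n + 1) → Fin 3)) := by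
    intro x hx y hy hxy
    simp only at hxy
    by_contra hne
    have hx0 : x 0 ≠ y 0 := by
      intro h0
      apply hne
      funext i
      refine Fin.cases h0 (fun j => ?_) i
      exact congrFun hxy j
    obtain ⟨z, hzD, hzx, hzy⟩ : ∃ z ∈ D, z ≠ x ∧ z ≠ y := by
      have hpos : 0 < ((D.erase x).erase y).card := by
        have h3 := Finset.pred_card_le_card_erase (a := y) (s := D.erase x)
        have h4 := Finset.pred_card_le_card_erase (a := x) (s := D)
        omega
      obtain ⟨z, hz⟩ := Finset.card_pos.mp hpos
      simp only [Finset.mem_erase] at hz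
      exact ⟨z, hz.2.2, hz.2.1, hz.1⟩
    have hxm : x ∈ D := hx
    have hym : y ∈ D := hy
    obtain ⟨i, h1, h2, h3⟩ := hC x (hDsub hxm) y (hDsub hym) z (hDsub hzD)
      hne (hzx ∘ Eq.symm) (hzy ∘ Eq.symm)
    rcases Fin.eq_zero_or_eq_succ i with h0 | ⟨j, rfl⟩
    · subst h0
      exact fin3_helper (x 0) (y 0) (z 0) v h1 h2 h3
        (by simpa using (Finset.mem_filter.mp hxm).2)
        (by simpa using (Finset.mem_filter.mp hym).2)
        (by simpa using (Finset.mem_filter.mp hzD).2)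
    · exact h1 (congrFun hxy j)
  have htrifE : Trifferent (D.image (fun x => x ∘ Fin.succ)) := by
    intro x' hx' y' hy' z' hz' hxy hxz hyz
    obtain ⟨x, hx, rfl⟩ := Finset.mem_image.mp hx'
    obtain ⟨y, hy, rfl⟩ := Finset.mem_image.mp hy'
    obtain ⟨z, hz, rfl⟩ := Finset.mem_image.mp hz'
    have hxyne : x ≠ y := fun h => hxy (by rw [h])
    have hxzne : x ≠ z := fun h => hxz (by rw [h])
    have hyzne : y ≠ z := fun h => hyz (by rw [h])
    obtain ⟨i, h1, h2, h3⟩ := hC x (hDsub hx) y (hDsub hy) z (hDsub hz) hxyne hxzne hyzne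
    rcases Fin.eq_zero_or_eq_succ i with h0 | ⟨j, rfl⟩
    · subst h0
      exact (fin3_helper (x 0) (y 0) (z 0) v h1 h2 h3
        (by simpa using (Finset.mem_filter.mp hx).2)
        (by simpa using (Finset.mem_filter.mp hy).2)
        (by simpa using (Finset.mem_filter.mp hz).2)).elim
    · exact ⟨j, h1, h2, h3⟩
  have hcard : (D.image (fun x => x ∘ Fin.succ)).card = D.card :=
    Finset.card_image_of_injOn hinj
  have hfin := hm (D.image (fun x => x ∘ Fin.succ)) htrifE
  rw [hcard] at hfin
  clear hcard htrifE hinj hD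
  omega

set_option maxRecDepth 10000 in
set_option synthInstance.maxSize 1000 in
set_option synthInstance.maxHeartbeats 400000 in
set_option maxHeartbeats 1000000 in
theorem max_trifferent_card_length_four :
    (∃ C : Finset (Fin 4 → Fin 3), Trifferent C ∧ C.card = 9) ∧
    ∀ C : Finset (Fin 4 → Fin 3), Trifferent C → C.card ≤ 9 := by
  constructor
  · refine ⟨{![0,0,0,0], ![0,1,1,2], ![0,2,2,1], ![1,0,1,1], ![1,1,2,0], ![1,2,0,2],
      ![2,0,2,2], ![2,1,0,1], ![2,2,1,0]}, ?_, ?_⟩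
    · unfold Trifferent; decide
    · decide
  · have h2 : ∀ C : Finset (Fin 2 → Fin 3), Trifferent C → C.card ≤ 4 := by
      intro C hC
      by_contra h
      exact trif_two C ⟨hC, by omega⟩
    have h3 : ∀ C : Finset (Fin 3 → Fin 3), Trifferent C → C.card ≤ 6 := by
      intro C hC
      have := trif_step (by norm_num) h2 C hC
      omega
    intro C hC
    have := trif_step (by norm_num) h3 C hC
    omega
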